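/- Under the power asymmetry specification with F continuous and strictly increasing from 0 to 1 on an interval [a,b] with inverse V : [0,1] → [a,b], for every bidder i and every τ ∈ [0,1]: P( max_{j≠i} V_j ≤ V(τ) | V_i > max_{j≠i} V_j ) = Ψ_i(τ), where Ψ_i(τ) = (Λ_N τ^{Λ_{N|i}} − Λ_{N|i} τ^{Λ_N}) / λ_i. Equivalently, conditional on bidder i winning, the quantile of the winning bid at level Ψ_i(τ) equals the parent quantile V(τ). -/

import Mathlib

open MeasureTheory ProbabilityTheory Set
open scoped ENNReal

/-- Under the power asymmetry specification with parent c.d.f. `F`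
continuous and strictly increasing from `0` to `1` on `[a,b]` with inverse quantile
function `V`, for every bidder `i` and `τ ∈ [0,1]`,
`P(max_{j≠i} V_j ≤ V(τ) | V_i > max_{j≠i} V_j) = Ψ_i(τ)` where
`Ψ_i(τ) = (Λ_N τ^{Λ_{N|i}} − Λ_{N|i} τ^{Λ_N}) / λ_i`: conditional on bidder `i`
winning, the quantile of the winning bid at level `Ψ_i(τ)` is the parent
quantile `V(τ)`. -/
theorem conditional_winningBid_quantile_power_asymmetry
    {Ω : Type*} [MeasurableSpace Ω] (μ : Measure Ω) [IsProbabilityMeasure μ]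
    (N : ℕ) (hN : 2 ≤ N) (l : Fin N → ℝ) (hl : ∀ i, 0 < l i)
    (a b : ℝ) (hab : a < b)
    (F Vq : ℝ → ℝ)
    (hFmono : Monotone F) (hFcont : Continuous F)
    (hFa : F a = 0) (hFb : F b = 1)
    (hFsm : StrictMonoOn F (Set.Icc a b))
    (hVmem : ∀ τ ∈ Set.Icc (0:ℝ) 1, Vq τ ∈ Set.Icc a b)
    (hVF : ∀ v ∈ Set.Icc a b, Vq (F v) = v)
    (hFV : ∀ τ ∈ Set.Icc (0:ℝ) 1, F (Vq τ) = τ)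
    (V : Fin N → Ω → ℝ) (hVmeas : ∀ i, Measurable (V i))
    (hindep : iIndepFun V μ)
    (hcdf : ∀ i v, μ {ω | V i ω ≤ v} = ENNReal.ofReal ((F v) ^ (l i)))
    (Ψ : Fin N → ℝ → ℝ)
    (hΨ : ∀ i τ, Ψ i τ = ((∑ j, l j) * τ ^ ((∑ j, l j) - l i)
        - ((∑ j, l j) - l i) * τ ^ (∑ j, l j)) / l i) :
    ∀ i, ∀ τ ∈ Set.Icc (0:ℝ) 1,
      (ProbabilityTheory.cond μ {ω | ∀ j, j ≠ i → V j ω < V i ω}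
          {ω | ∀ j, j ≠ i → V j ω ≤ Vq τ}).toReal
        = Ψ i τ := by
  intro i τ hτ
  have haI : a ∈ Icc a b := ⟨le_refl a, hab.le⟩
  have hbI : b ∈ Icc a b := ⟨hab.le, le_refl b⟩
  have hF01 : ∀ v ∈ Icc a b, F v ∈ Icc (0:ℝ) 1 := fun v hv =>
    ⟨hFa ▸ hFmono hv.1, hFb ▸ hFmono hv.2⟩
  haveI : Nontrivial (Fin N) := Fin.nontrivial_iff_two_le.mpr hN
  set Λ : ℝ := ∑ j, l j with hΛdef
  set Li : ℝ := Λ - l i with hLidef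
  have hΛpos : 0 < Λ := Finset.sum_pos (fun j _ => hl j) Finset.univ_nonempty
  obtain ⟨j0, hj0⟩ := exists_ne i
  set s : Finset (Fin N) := Finset.univ.erase i with hs_def
  have hsne : s.Nonempty := ⟨j0, Finset.mem_erase.mpr ⟨hj0, Finset.mem_univ _⟩⟩
  have hmem_s : ∀ j, j ∈ s ↔ j ≠ i := fun j => by simp [hs_def]
  have hLi_sum : ∑ j ∈ s, l j = Li := by
    have h := Finset.sum_erase_add Finset.univ l (Finset.mem_univ i)
    rw [hLidef, hΛdef]
    rw [hs_def]
    linarith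
  have hLipos : 0 < Li := by
    rw [← hLi_sum]; exact Finset.sum_pos (fun j _ => hl j) hsne
  -- the max of the others
  set M : Ω → ℝ := fun ω => s.sup' hsne (fun j => V j ω) with hM
  have hMmeas : Measurable M := by
    have h := Finset.measurable_sup' hsne (fun n (_ : n ∈ s) => hVmeas n)
    have he : M = s.sup' hsne V := funext fun ω => (Finset.sup'_apply hsne V ω).symm
    rw [he]; exact h
  -- rewriting the events
  have hA_eq : {ω | ∀ j, j ≠ i → V j ω < V i ω} = {ω | M ω < V i ω} := by
    ext ω
    simp only [Set.mem_setOf_eq, hM, Finset.sup'_lt_iff]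
    exact ⟨fun h j hj => h j ((hmem_s j).mp hj), fun h j hj => h j ((hmem_s j).mpr hj)⟩
  have hB_eq : ∀ x : ℝ, {ω | ∀ j, j ≠ i → V j ω ≤ x} = {ω | M ω ≤ x} := by
    intro x; ext ω
    simp only [Set.mem_setOf_eq, hM, Finset.sup'_le_iff]
    exact ⟨fun h j hj => h j ((hmem_s j).mp hj), fun h j hj => h j ((hmem_s j).mpr hj)⟩
  have hAmeas : MeasurableSet {ω | M ω < V i ω} := measurableSet_lt hMmeas (hVmeas i)
  -- null sets
  have h_le_a : ∀ j, μ {ω | V j ω ≤ a} = 0 := fun j => by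
    rw [hcdf j a, hFa, Real.zero_rpow (hl j).ne', ENNReal.ofReal_zero]
  have h_gt_b : ∀ j, μ {ω | b < V j ω} = 0 := fun j => by
    have h1 : μ {ω | V j ω ≤ b} = 1 := by
      rw [hcdf j b, hFb, Real.one_rpow, ENNReal.ofReal_one]
    have h2 : {ω | b < V j ω} = {ω | V j ω ≤ b}ᶜ := by ext ω; simp [not_le]
    rw [h2, measure_compl (show MeasurableSet {ω | V j ω ≤ b} from (hVmeas j) measurableSet_Iic) (measure_ne_top μ _), measure_univ, h1,
      tsub_self]
  set G : Set Ω := {ω | ∀ j, a < V j ω ∧ V j ω ≤ b} with hG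
  have hGc : μ Gᶜ = 0 := by
    have hsub : Gᶜ ⊆ ⋃ j, ({ω | V j ω ≤ a} ∪ {ω | b < V j ω}) := by
      intro ω hω
      simp only [hG, mem_compl_iff, mem_setOf_eq, not_forall] at hω
      obtain ⟨j, hj⟩ := hω
      rw [not_and_or, not_lt, not_le] at hj
      exact mem_iUnion.mpr ⟨j, hj⟩
    exact measure_mono_null hsub
      (measure_iUnion_null fun j => measure_union_null (h_le_a j) (h_gt_b j))
  have hMG : ∀ ω ∈ G, M ω ∈ Ioc a b := by
    intro ω hω
    constructor
    · exact lt_of_lt_of_le (hω j0).1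
        (Finset.le_sup' (fun j => V j ω) (Finset.mem_erase.mpr ⟨hj0, Finset.mem_univ _⟩))
    · exact Finset.sup'_le hsne _ fun j _ => (hω j).2
  -- CDF of M
  have hMcdf : ∀ v ∈ Icc a b, μ {ω | M ω ≤ v} = ENNReal.ofReal (F v ^ Li) := by
    intro v hv
    have hsets : {ω | M ω ≤ v} = ⋂ j ∈ s, {ω | V j ω ≤ v} := by
      ext ω
      simp only [Set.mem_setOf_eq, hM, Finset.sup'_le_iff, mem_iInter]
    have hFv0 : 0 ≤ F v := (hF01 v hv).1
    calc μ {ω | M ω ≤ v} = ∏ j ∈ s, μ {ω | V j ω ≤ v} := by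
          rw [hsets]
          exact hindep.meas_biInter fun j _ => ⟨Iic v, measurableSet_Iic, rfl⟩
      _ = ∏ j ∈ s, ENNReal.ofReal (F v ^ l j) := Finset.prod_congr rfl fun j _ => hcdf j v
      _ = ENNReal.ofReal (∏ j ∈ s, F v ^ l j) :=
          (ENNReal.ofReal_prod_of_nonneg fun j _ => Real.rpow_nonneg hFv0 _).symm
      _ = ENNReal.ofReal (F v ^ Li) := by
          rw [← Real.rpow_sum_of_nonneg hFv0 fun j _ => (hl j).le, hLi_sum]
  -- laws
  set νM := μ.map M with hνM
  set νi := μ.map (V i) with hνi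
  haveI : IsProbabilityMeasure νM := Measure.isProbabilityMeasure_map hMmeas.aemeasurable
  haveI : IsProbabilityMeasure νi := Measure.isProbabilityMeasure_map (hVmeas i).aemeasurable
  have hνM_null : νM (Ioc a b)ᶜ = 0 := by
    rw [hνM, Measure.map_apply hMmeas measurableSet_Ioc.compl]
    refine measure_mono_null (fun ω hω => ?_) hGc
    intro hωG
    exact hω (hMG ω hωG)
  have hνi_Ioi : ∀ m : ℝ, νi (Ioi m) = 1 - ENNReal.ofReal (F m ^ l i) := by
    intro m
    rw [hνi, Measure.map_apply (hVmeas i) measurableSet_Ioi]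
    have h2 : (V i) ⁻¹' (Ioi m) = {ω | V i ω ≤ m}ᶜ := by ext ω; simp [not_le]
    rw [h2, measure_compl (show MeasurableSet {ω | V i ω ≤ m} from (hVmeas i) measurableSet_Iic) (measure_ne_top μ _), measure_univ,
      hcdf i m]
  -- independence of M and V i
  have hindepMV : IndepFun M (V i) μ := by
    haveI : Nonempty ↥s := hsne.to_subtype
    have h1 := hindep.indepFun_finset s {i}
      (by simp [hs_def, Finset.disjoint_singleton_right]) hVmeas
    have hφM : Measurable fun x : ↥s → ℝ =>
        (Finset.univ : Finset ↥s).sup' Finset.univ_nonempty x := by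
      have h := Finset.measurable_sup' (s := (Finset.univ : Finset ↥s)) Finset.univ_nonempty
        (f := fun (j : ↥s) (x : ↥s → ℝ) => x j) (fun j _ => measurable_pi_apply j)
      have he : (Finset.univ.sup' Finset.univ_nonempty fun (j : ↥s) (x : ↥s → ℝ) => x j)
          = fun x : ↥s → ℝ => Finset.univ.sup' Finset.univ_nonempty x := by
        funext x
        rw [Finset.sup'_apply]
      rwa [he] at h
    have hφi : Measurable fun x : ({i} : Finset (Fin N)) → ℝ =>
        x ⟨i, Finset.mem_singleton_self i⟩ := measurable_pi_apply _
    have h2 := h1.comp hφM hφi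
    have he1 : ((fun x : ↥s → ℝ => (Finset.univ : Finset ↥s).sup' Finset.univ_nonempty x) ∘
        fun ω (j : ↥s) => V j ω) = M := by
      funext ω
      show (Finset.univ : Finset ↥s).sup' Finset.univ_nonempty (fun j : ↥s => V (j : Fin N) ω)
          = s.sup' hsne (fun j => V j ω)
      apply le_antisymm
      · exact Finset.sup'_le _ _ fun j _ => Finset.le_sup' (fun k => V k ω) j.2
      · exact Finset.sup'_le _ _ fun j hj =>
          Finset.le_sup' (fun k : ↥s => V (k : Fin N) ω) (Finset.mem_univ (⟨j, hj⟩ : ↥s))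
    have he2 : ((fun x : ({i} : Finset (Fin N)) → ℝ => x ⟨i, Finset.mem_singleton_self i⟩) ∘
        fun ω (j : ({i} : Finset (Fin N))) => V j ω) = V i := rfl
    rwa [he1, he2] at h2
  have hmap_pair : μ.map (fun ω => (M ω, V i ω)) = νM.prod νi :=
    (indepFun_iff_map_prod_eq_prod_map_map hMmeas.aemeasurable (hVmeas i).aemeasurable).mp hindepMV
  -- the pushforward of `νM` under `φ` is uniform on `(0,1]`
  set φ : ℝ → ℝ := fun x => (F x) ^ Li with hφ
  have hφcont : Continuous φ := (Real.continuous_rpow_const hLipos.le).comp hFcont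
  have hφmeas : Measurable φ := hφcont.measurable
  have hres : ∀ S : Set ℝ, νM S = νM (S ∩ Ioc a b) :=
    fun S => (measure_inter_conull hνM_null).symm
  have hIoc1 : νM (Ioc a b) = 1 := by
    have h := measure_add_measure_compl (μ := νM) (s := Ioc a b) measurableSet_Ioc
    rw [hνM_null, add_zero, measure_univ] at h
    exact h
  have hpush : νM.map φ = volume.restrict (Ioc 0 1) := by
    refine MeasureTheory.Measure.ext_of_Iic (νM.map φ) _ fun x => ?_
    rw [Measure.map_apply hφmeas measurableSet_Iic, Measure.restrict_apply measurableSet_Iic]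
    have hIic_inter : Iic x ∩ Ioc (0:ℝ) 1 = Ioc 0 (min x 1) := by
      ext y; simp only [mem_inter_iff, mem_Iic, mem_Ioc, le_min_iff]; tauto
    rw [hIic_inter, Real.volume_Ioc, sub_zero]
    have hφm_mem : ∀ m ∈ Ioc a b, φ m ∈ Ioc (0:ℝ) 1 := by
      intro m hm
      have hmI : m ∈ Icc a b := ⟨hm.1.le, hm.2⟩
      have hFm_pos : 0 < F m := by
        have := hFsm haI hmI hm.1
        rwa [hFa] at this
      exact ⟨Real.rpow_pos_of_pos hFm_pos _,
        Real.rpow_le_one hFm_pos.le (hF01 m hmI).2 hLipos.le⟩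
    rcases le_or_gt x 0 with hx0 | hx0
    · have hempty : φ ⁻¹' Iic x ∩ Ioc a b = ∅ := by
        ext m
        simp only [mem_inter_iff, mem_preimage, mem_Iic, mem_empty_iff_false, iff_false, not_and]
        intro hmx hm
        exact absurd (lt_of_lt_of_le (hφm_mem m hm).1 hmx) (not_lt.mpr hx0)
      rw [hres (φ ⁻¹' Iic x), hempty, measure_empty]
      rw [min_eq_left (hx0.trans zero_le_one), ENNReal.ofReal_eq_zero.mpr hx0]
    rcases le_or_gt 1 x with hx1 | hx1
    · have hfull : φ ⁻¹' Iic x ∩ Ioc a b = Ioc a b := by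
        ext m
        simp only [mem_inter_iff, mem_preimage, mem_Iic]
        exact ⟨fun h => h.2, fun h => ⟨le_trans (hφm_mem m h).2 hx1, h⟩⟩
      rw [hres (φ ⁻¹' Iic x), hfull, hIoc1, min_eq_right hx1, ENNReal.ofReal_one]
    · -- 0 < x < 1
      set t' : ℝ := x ^ Li⁻¹ with ht'
      have ht'pos : 0 < t' := Real.rpow_pos_of_pos hx0 _
      have ht'lt1 : t' < 1 := Real.rpow_lt_one hx0.le hx1 (by positivity)
      have ht'I : t' ∈ Icc (0:ℝ) 1 := ⟨ht'pos.le, ht'lt1.le⟩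
      have hct'I : Vq t' ∈ Icc a b := hVmem t' ht'I
      have hFct' : F (Vq t') = t' := hFV t' ht'I
      have hxt' : t' ^ Li = x := Real.rpow_inv_rpow hx0.le hLipos.ne'
      have hset : φ ⁻¹' Iic x ∩ Ioc a b = Ioc a (Vq t') := by
        ext m
        simp only [mem_inter_iff, mem_preimage, mem_Iic, mem_Ioc]
        constructor
        · rintro ⟨hφx, ham, hmb⟩
          have hmI : m ∈ Icc a b := ⟨ham.le, hmb⟩
          refine ⟨ham, ?_⟩
          by_contra hcon
          push_neg at hcon
          have : t' < F m := by
            have := hFsm hct'I hmI hcon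
            rwa [hFct'] at this
          have : x < φ m := by
            rw [← hxt']
            exact Real.rpow_lt_rpow ht'pos.le this hLipos
          exact absurd hφx (not_le.mpr this)
        · rintro ⟨ham, hmt⟩
          have hmb : m ≤ b := hmt.trans hct'I.2
          have hmI : m ∈ Icc a b := ⟨ham.le, hmb⟩
          refine ⟨?_, ham, hmb⟩
          have hFm : F m ≤ t' := by
            have := hFmono hmt
            rwa [hFct'] at this
          calc φ m = F m ^ Li := rfl
            _ ≤ t' ^ Li := Real.rpow_le_rpow (hF01 m hmI).1 hFm hLipos.le
            _ = x := hxt'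
      have hset2 : Ioc a (Vq t') = Iic (Vq t') ∩ Ioc a b := by
        ext m
        simp only [mem_Ioc, mem_inter_iff, mem_Iic]
        exact ⟨fun h => ⟨h.2, h.1, h.2.trans hct'I.2⟩, fun h => ⟨h.2.1, h.1⟩⟩
      rw [hres (φ ⁻¹' Iic x), hset, hset2, ← hres (Iic (Vq t'))]
      rw [hνM, Measure.map_apply hMmeas measurableSet_Iic]
      have : (M ⁻¹' Iic (Vq t')) = {ω | M ω ≤ Vq t'} := rfl
      rw [this, hMcdf (Vq t') hct'I, hFct', hxt', min_eq_left hx1.le]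
  -- the key computation
  have key : ∀ τ' ∈ Icc (0:ℝ) 1,
      μ {ω | M ω < V i ω ∧ M ω ≤ Vq τ'} = ENNReal.ofReal (τ' ^ Li - Li / Λ * τ' ^ Λ) := by
    intro τ' hτ'
    set c' : ℝ := Vq τ' with hc'
    have hc'I : c' ∈ Icc a b := hVmem τ' hτ'
    have hFc' : F c' = τ' := hFV τ' hτ'
    set σ0 : ℝ := τ' ^ Li with hσ0
    have hσ0nn : 0 ≤ σ0 := Real.rpow_nonneg hτ'.1 _
    have hσ0le1 : σ0 ≤ 1 := Real.rpow_le_one hτ'.1 hτ'.2 hLipos.le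
    set p : ℝ := l i / Li with hp
    have hppos : 0 < p := div_pos (hl i) hLipos
    set g : ℝ → ℝ≥0∞ :=
      fun u => (Iic σ0).indicator (fun u => ENNReal.ofReal (1 - u ^ p)) u with hg
    have hg_meas : Measurable g := by
      refine Measurable.indicator ?_ measurableSet_Iic
      exact ENNReal.measurable_ofReal.comp
        (measurable_const.sub (Real.continuous_rpow_const hppos.le).measurable)
    have hSmeas : MeasurableSet {q : ℝ × ℝ | q.1 < q.2 ∧ q.1 ≤ c'} :=
      (measurableSet_lt measurable_fst measurable_snd).inter (measurable_fst measurableSet_Iic)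
    have hstep1 : μ {ω | M ω < V i ω ∧ M ω ≤ c'} =
        ∫⁻ m, (Iic c').indicator (fun m => νi (Ioi m)) m ∂νM := by
      have hpre : {ω | M ω < V i ω ∧ M ω ≤ c'} =
          (fun ω => (M ω, V i ω)) ⁻¹' {q : ℝ × ℝ | q.1 < q.2 ∧ q.1 ≤ c'} := rfl
      rw [hpre, ← Measure.map_apply (hMmeas.prodMk (hVmeas i)) hSmeas, hmap_pair,
        Measure.prod_apply hSmeas]
      congr 1
      funext m
      by_cases hm : m ≤ c'
      · rw [indicator_of_mem (mem_Iic.mpr hm)]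
        congr 1
        ext v
        simp [hm]
      · rw [indicator_of_notMem (fun h => hm (mem_Iic.mp h))]
        have : (Prod.mk m ⁻¹' {q : ℝ × ℝ | q.1 < q.2 ∧ q.1 ≤ c'}) = ∅ := by
          ext v; simp [hm]
        rw [this, measure_empty]
    have hae : ∀ m ∈ Ioc a b, (Iic c').indicator (fun m => νi (Ioi m)) m = g (φ m) := by
      intro m hm
      have hmI : m ∈ Icc a b := ⟨hm.1.le, hm.2⟩
      have hFm0 : 0 ≤ F m := (hF01 m hmI).1
      have hcond : m ≤ c' ↔ φ m ≤ σ0 := by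
        have h1 : φ m ≤ σ0 ↔ F m ≤ τ' := by
          rw [hφ, hσ0]
          exact Real.rpow_le_rpow_iff hFm0 hτ'.1 hLipos
        rw [h1]
        constructor
        · intro h
          have := hFmono h
          rwa [hFc'] at this
        · intro h
          by_contra hcon
          push_neg at hcon
          have := hFsm hc'I hmI hcon
          rw [hFc'] at this
          exact absurd h (not_le.mpr this)
      have hrw : F m ^ l i = (φ m) ^ p := by
        show F m ^ l i = (F m ^ Li) ^ p
        rw [← Real.rpow_mul hFm0]
        congr 1
        rw [hp]
        field_simp
      have hgval : ∀ u : ℝ, g u = (Iic σ0).indicator (fun u => ENNReal.ofReal (1 - u ^ p)) u :=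
        fun u => rfl
      by_cases hm' : m ≤ c'
      · rw [indicator_of_mem (mem_Iic.mpr hm'), hgval,
          indicator_of_mem (mem_Iic.mpr (hcond.mp hm'))]
        rw [hνi_Ioi m, hrw]
        rw [← ENNReal.ofReal_one, ← ENNReal.ofReal_sub _ (Real.rpow_nonneg
          (Real.rpow_nonneg ((hF01 m hmI).1) _) _)]
      · rw [indicator_of_notMem (fun h => hm' (mem_Iic.mp h)), hgval,
          indicator_of_notMem (fun h => (hm' (hcond.mpr (mem_Iic.mp h))))]
    have haeν : ∀ᵐ m ∂νM, m ∈ Ioc a b := by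
      rw [ae_iff]
      exact measure_mono_null (fun m hm => hm) hνM_null
    have hstep2 : ∫⁻ m, (Iic c').indicator (fun m => νi (Ioi m)) m ∂νM = ∫⁻ m, g (φ m) ∂νM :=
      lintegral_congr_ae (haeν.mono fun m hm => hae m hm)
    have hsets3 : Iic σ0 ∩ Ioc 0 1 = Ioc 0 σ0 := by
      ext y
      simp only [mem_inter_iff, mem_Iic, mem_Ioc]
      exact ⟨fun h => ⟨h.2.1, h.1⟩, fun h => ⟨h.2, h.1, h.2.trans hσ0le1⟩⟩
    have hstep3 : ∫⁻ m, g (φ m) ∂νM = ∫⁻ u in Ioc 0 σ0, ENNReal.ofReal (1 - u ^ p) := by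
      rw [← lintegral_map hg_meas hφmeas, hpush, hg]
      rw [lintegral_indicator measurableSet_Iic, Measure.restrict_restrict measurableSet_Iic,
        hsets3]
    have hint : IntegrableOn (fun u : ℝ => 1 - u ^ p) (Ioc 0 σ0) volume := by
      have h1 : IntervalIntegrable (fun u : ℝ => 1 - u ^ p) volume 0 σ0 :=
        intervalIntegrable_const.sub (intervalIntegral.intervalIntegrable_rpow' (by linarith))
      exact h1.1
    have hnn : 0 ≤ᵐ[volume.restrict (Ioc 0 σ0)] fun u : ℝ => 1 - u ^ p := by
      refine (ae_restrict_mem measurableSet_Ioc).mono fun u hu => ?_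
      have h1 : u ^ p ≤ 1 := Real.rpow_le_one hu.1.le (hu.2.trans hσ0le1) hppos.le
      show (0:ℝ) ≤ 1 - u ^ p
      linarith
    have hstep4 : ∫⁻ u in Ioc 0 σ0, ENNReal.ofReal (1 - u ^ p) =
        ENNReal.ofReal (∫ u in Ioc 0 σ0, (1 - u ^ p)) :=
      (ofReal_integral_eq_lintegral_ofReal hint hnn).symm
    have hreal : ∫ u in Ioc 0 σ0, (1 - u ^ p) = σ0 - σ0 ^ (p + 1) / (p + 1) := by
      rw [← intervalIntegral.integral_of_le hσ0nn]
      rw [intervalIntegral.integral_sub intervalIntegrable_const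
        (intervalIntegral.intervalIntegrable_rpow' (by linarith))]
      rw [intervalIntegral.integral_const, integral_rpow (Or.inl (by linarith))]
      rw [Real.zero_rpow (by positivity)]
      simp only [smul_eq_mul, sub_zero, mul_one]
    have halg : σ0 - σ0 ^ (p + 1) / (p + 1) = τ' ^ Li - Li / Λ * τ' ^ Λ := by
      have hΛ_eq : Λ = l i + Li := by rw [hLidef]; ring
      have h1 : p + 1 = Λ / Li := by
        rw [hp, hΛ_eq]
        field_simp
      have h2 : σ0 ^ (p + 1) = τ' ^ Λ := by
        rw [h1, hσ0, ← Real.rpow_mul hτ'.1]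
        congr 1
        field_simp
      rw [h2, h1, hσ0]
      rw [div_div_eq_mul_div]
      ring
    rw [hstep1, hstep2, hstep3, hstep4, hreal, halg]
  -- probability of winning
  have hVq1 : Vq 1 = b := by
    have h1 : F (Vq 1) = F b := by rw [hFV 1 ⟨zero_le_one, le_refl 1⟩, hFb]
    exact hFsm.injOn (hVmem 1 ⟨zero_le_one, le_refl 1⟩) hbI h1
  have hA1 : μ {ω | M ω < V i ω} = ENNReal.ofReal (l i / Λ) := by
    have h1 := key 1 ⟨zero_le_one, le_refl 1⟩
    rw [hVq1] at h1
    have heq : μ {ω | M ω < V i ω} = μ {ω | M ω < V i ω ∧ M ω ≤ b} := by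
      apply le_antisymm
      · have hsub2 : {ω | M ω < V i ω} ⊆ {ω | M ω < V i ω ∧ M ω ≤ b} ∪ Gᶜ := by
          intro ω hω
          by_cases hωG : ω ∈ G
          · exact Or.inl ⟨hω, (hMG ω hωG).2⟩
          · exact Or.inr hωG
        calc μ {ω | M ω < V i ω} ≤ μ ({ω | M ω < V i ω ∧ M ω ≤ b} ∪ Gᶜ) := measure_mono hsub2
          _ ≤ μ {ω | M ω < V i ω ∧ M ω ≤ b} + μ Gᶜ := measure_union_le _ _
          _ = μ {ω | M ω < V i ω ∧ M ω ≤ b} := by rw [hGc, add_zero]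
      · exact measure_mono fun ω hω => hω.1
    rw [heq, h1, Real.one_rpow, Real.one_rpow]
    congr 1
    rw [hLidef]
    field_simp
    ring
  -- nonnegativity of the value
  have hKnn : 0 ≤ τ ^ Li - Li / Λ * τ ^ Λ := by
    have hΛ_eq : Λ = Li + l i := by rw [hLidef]; ring
    have h1 : τ ^ Λ = τ ^ Li * τ ^ l i := by
      rw [hΛ_eq, Real.rpow_add_of_nonneg hτ.1 hLipos.le (hl i).le]
    have h2 : τ ^ l i ≤ 1 := Real.rpow_le_one hτ.1 hτ.2 (hl i).le
    have h3 : τ ^ Λ ≤ τ ^ Li := by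
      rw [h1]
      calc τ ^ Li * τ ^ l i ≤ τ ^ Li * 1 := by
            exact mul_le_mul_of_nonneg_left h2 (Real.rpow_nonneg hτ.1 _)
        _ = τ ^ Li := mul_one _
    have h4 : Li / Λ ≤ 1 := by
      rw [div_le_one hΛpos]
      linarith [hl i]
    have h5 : Li / Λ * τ ^ Λ ≤ τ ^ Λ := by
      calc Li / Λ * τ ^ Λ ≤ 1 * τ ^ Λ :=
            mul_le_mul_of_nonneg_right h4 (Real.rpow_nonneg hτ.1 _)
        _ = τ ^ Λ := one_mul _
    linarith
  -- final assembly
  rw [hA_eq, hB_eq (Vq τ)]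
  rw [cond_apply hAmeas]
  have hAB : {ω | M ω < V i ω} ∩ {ω | M ω ≤ Vq τ} = {ω | M ω < V i ω ∧ M ω ≤ Vq τ} := rfl
  rw [hAB, hA1, key τ hτ]
  rw [ENNReal.toReal_mul, ENNReal.toReal_inv,
    ENNReal.toReal_ofReal (div_pos (hl i) hΛpos).le, ENNReal.toReal_ofReal hKnn]
  rw [hΨ, hLidef]
  have hline : l i ≠ 0 := (hl i).ne'
  have hΛne : Λ ≠ 0 := hΛpos.ne'
  field_simp
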